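/- Every periodic 2-coloring c of the plane satisfies p^per(c) ≥ 1/3. -/

import Mathlib

open MeasureTheory Real

noncomputable section

abbrev Plane := EuclideanSpace ℝ (Fin 2)

def vec (x y : ℝ) : Plane := (WithLp.equiv 2 (Fin 2 → ℝ)).symm ![x, y]

def dir (θ : ℝ) : Plane := vec (Real.cos θ) (Real.sin θ)

/-- The fundamental parallelogram `{t•u + s•v : 0 ≤ t, s < 1}`. -/
def para (u v : Plane) : Set Plane :=
  {x | ∃ t s : ℝ, 0 ≤ t ∧ t < 1 ∧ 0 ≤ s ∧ s < 1 ∧ x = t • u + s • v}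

/-- `p^per(c)` for a periodic coloring with fundamental parallelogram `para u v`. -/
def pper {k : ℕ} (c : Plane → Fin k) (u v : Plane) : ℝ :=
  (1 / (2 * π * (volume (para u v)).toReal)) *
    ∫ a in para u v, ∫ θ in (0:ℝ)..(2*π),
      (if c a = c (a + dir θ) then (1:ℝ) else 0)

/-! ### Auxiliary lemmas -/

open Submodule Pointwise

lemma continuous_dir : Continuous dir := by
  unfold dir vec
  refine (PiLp.continuous_toLp 2 (fun _ : Fin 2 => ℝ)).comp ?_
  refine continuous_pi fun i => ?_
  fin_cases i <;> simp <;> fun_prop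

lemma dir_periodic : Function.Periodic dir (2 * π) := by
  intro θ; simp [dir]

lemma dir_triangle (θ : ℝ) : dir (θ + π/3) = dir θ + dir (θ + 2*π/3) := by
  unfold dir vec
  have hc23 : Real.cos (2*π/3) = -(1/2) := by
    rw [show (2*π/3 : ℝ) = π - π/3 by ring, Real.cos_pi_sub, Real.cos_pi_div_three]
  have hs23 : Real.sin (2*π/3) = Real.sqrt 3 / 2 := by
    rw [show (2*π/3 : ℝ) = π - π/3 by ring, Real.sin_pi_sub, Real.sin_pi_div_three]
  have h1 : Real.cos (θ + π/3) = Real.cos θ + Real.cos (θ + 2*π/3) := by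
    rw [Real.cos_add, Real.cos_add, Real.cos_pi_div_three, Real.sin_pi_div_three, hc23, hs23]
    ring
  have h2 : Real.sin (θ + π/3) = Real.sin θ + Real.sin (θ + 2*π/3) := by
    rw [Real.sin_add, Real.sin_add, Real.cos_pi_div_three, Real.sin_pi_div_three, hc23, hs23]
    ring
  rw [h1, h2]
  ext i
  fin_cases i <;> simp [WithLp.equiv_symm_apply, PiLp.toLp_apply]

/-- Translation invariance of the integral over a fundamental domain, for
lattice-periodic functions. -/
lemma setIntegral_fundamentalDomain_add (b : Module.Basis (Fin 2) ℝ Plane) (g : Plane → ℝ)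
    (hper : ∀ l ∈ span ℤ (Set.range ⇑b), ∀ x : Plane, g (x + l) = g x) (w : Plane) :
    ∫ a in ZSpan.fundamentalDomain b, g (a + w) = ∫ a in ZSpan.fundamentalDomain b, g a := by
  set D := ZSpan.fundamentalDomain b with hDdef
  set L := (span ℤ (Set.range ⇑b)).toAddSubgroup with hLdef
  haveI : Countable ↥L := inferInstanceAs (Countable (span ℤ (Set.range ⇑b)))
  have hD : IsAddFundamentalDomain L D volume := ZSpan.isAddFundamentalDomain' b volume
  have h1 : ∫ a in D, g (a + w) = ∫ y in (fun x => x + w) '' D, g y :=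
    ((measurePreserving_add_right volume w).setIntegral_image_emb
      (measurableEmbedding_addRight w) g D).symm
  have himg : (fun x => x + w) '' D = w +ᵥ D := by
    ext y
    simp only [Set.mem_image, Set.mem_vadd_set]
    constructor
    · rintro ⟨x, hx, rfl⟩; exact ⟨x, hx, by rw [vadd_eq_add, add_comm]⟩
    · rintro ⟨x, hx, rfl⟩; exact ⟨x, hx, by rw [vadd_eq_add, add_comm]⟩
  have hD' : IsAddFundamentalDomain L (w +ᵥ D) volume := hD.vadd_of_comm w
  rw [h1, himg]
  refine hD'.setIntegral_eq hD (fun l x => ?_)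
  have := hper l l.2 x
  simpa [AddSubgroup.vadd_def, vadd_eq_add, add_comm] using this

lemma lattice_periodic (c : Plane → Fin 2) (u v : Plane)
    (hper : ∀ x : Plane, c (x + u) = c x ∧ c (x + v) = c x) :
    ∀ l ∈ span ℤ (Set.range ![u, v]), ∀ x : Plane, c (x + l) = c x := by
  have hz : ∀ w : Plane, (∀ x, c (x + w) = c x) → ∀ (n : ℤ) (x : Plane), c (x + n • w) = c x := by
    intro w hw n
    induction n using Int.induction_on with
    | zero => simp
    | succ n ih =>
      intro x
      have : x + ((n : ℤ) + 1) • w = (x + (n : ℤ) • w) + w := by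
        rw [add_smul, one_smul]; abel
      rw [this, hw, ih]
    | pred n ih =>
      intro x
      have h2 : (x + (-(n : ℤ) - 1) • w) + w = x + (-(n : ℤ)) • w := by
        rw [sub_smul, one_smul]; abel
      have h3 := hw (x + (-(n : ℤ) - 1) • w)
      rw [h2] at h3
      rw [← h3, ih x]
  intro l hl x
  rw [mem_span_range_iff_exists_fun] at hl
  obtain ⟨f, hf⟩ := hl
  rw [Fin.sum_univ_two] at hf
  simp only [Matrix.cons_val_zero, Matrix.cons_val_one, Matrix.head_cons] at hf
  have : x + l = (x + f 0 • u) + f 1 • v := by rw [← hf]; abel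
  rw [this, hz v (fun y => (hper y).2), hz u (fun y => (hper y).1)]

/-- Every periodic 2-coloring of the plane satisfies `p^per(c) ≥ 1/3`. -/
theorem stmt8 (c : Plane → Fin 2) (hc : Measurable c) (u v : Plane)
    (huv : LinearIndependent ℝ ![u, v])
    (hper : ∀ x : Plane, c (x + u) = c x ∧ c (x + v) = c x) :
    1 / 3 ≤ pper c u v := by
  classical
  -- the basis and the identification of `para u v` with the fundamental domain
  have hcard : Fintype.card (Fin 2) = Module.finrank ℝ Plane := by
    simp [finrank_euclideanSpace]
  set b : Module.Basis (Fin 2) ℝ Plane := basisOfLinearIndependentOfCardEqFinrank huv hcard with hbdef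
  have hb : ⇑b = ![u, v] := coe_basisOfLinearIndependentOfCardEqFinrank huv hcard
  have hb0 : b 0 = u := by rw [hb]; rfl
  have hb1 : b 1 = v := by rw [hb]; rfl
  have hpara : para u v = ZSpan.fundamentalDomain b := by
    ext x
    constructor
    · rintro ⟨t, s, ht0, ht1, hs0, hs1, rfl⟩ i
      have hx : t • u + s • v = t • b 0 + s • b 1 := by rw [hb0, hb1]
      rw [hx]
      simp only [map_add, _root_.map_smul, Module.Basis.repr_self]
      fin_cases i <;> simp [Finsupp.single_apply, ht0, ht1, hs0, hs1]
    · intro h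
      refine ⟨b.repr x 0, b.repr x 1, (h 0).1, (h 0).2, (h 1).1, (h 1).2, ?_⟩
      have := b.sum_repr x
      rw [Fin.sum_univ_two, hb0, hb1] at this
      exact this.symm
  set D := ZSpan.fundamentalDomain b with hDdef
  -- periodicity of `c` under the lattice
  have hlat : ∀ l ∈ span ℤ (Set.range ⇑b), ∀ x : Plane, c (x + l) = c x := by
    rw [hb]; exact lattice_periodic c u v hper
  -- the indicator kernel
  set F : Plane → ℝ → ℝ := fun a θ => if c a = c (a + dir θ) then 1 else 0 with hFdef
  have hF01 : ∀ a θ, F a θ = 0 ∨ F a θ = 1 := by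
    intro a θ; by_cases h : c a = c (a + dir θ) <;> simp [hFdef, h]
  have hFnonneg : ∀ a θ, 0 ≤ F a θ := by
    intro a θ; rcases hF01 a θ with h | h <;> rw [h] <;> norm_num
  have hFle : ∀ a θ, F a θ ≤ 1 := by
    intro a θ; rcases hF01 a θ with h | h <;> rw [h] <;> norm_num
  -- periodicity of `F` in `θ`
  have hFper : ∀ a : Plane, Function.Periodic (F a) (2 * π) := by
    intro a θ; simp only [hFdef, dir_periodic θ]
  -- measurability
  have hmeq : MeasurableSet {p : Plane × Plane | c p.1 = c p.2} := by
    have : {p : Plane × Plane | c p.1 = c p.2} =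
        ⋃ i : Fin 2, ((c ∘ Prod.fst) ⁻¹' {i}) ∩ ((c ∘ Prod.snd) ⁻¹' {i}) := by
      ext p
      simp only [Set.mem_setOf_eq, Set.mem_iUnion, Set.mem_inter_iff, Set.mem_preimage,
        Function.comp_apply, Set.mem_singleton_iff]
      constructor
      · intro h; exact ⟨c p.2, h, rfl⟩
      · rintro ⟨i, h1, h2⟩; rw [h1, h2]
    rw [this]
    exact MeasurableSet.iUnion fun i =>
      ((hc.comp measurable_fst) (measurableSet_singleton i)).inter
        ((hc.comp measurable_snd) (measurableSet_singleton i))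
  have hmf : Measurable fun p : Plane × Plane => (if c p.1 = c p.2 then (1:ℝ) else 0) :=
    Measurable.ite hmeq measurable_const measurable_const
  have hmF : ∀ (w₁ : Plane → ℝ → Plane) (w₂ : Plane → ℝ → ℝ),
      Measurable (fun p : Plane × ℝ => w₁ p.1 p.2) →
      Measurable (fun p : Plane × ℝ => w₂ p.1 p.2) →
      Measurable (fun p : Plane × ℝ => F (w₁ p.1 p.2) (w₂ p.1 p.2)) := by
    intro w₁ w₂ h₁ h₂
    have : (fun p : Plane × ℝ => F (w₁ p.1 p.2) (w₂ p.1 p.2)) =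
        (fun q : Plane × Plane => if c q.1 = c q.2 then (1:ℝ) else 0) ∘
          (fun p : Plane × ℝ => (w₁ p.1 p.2, w₁ p.1 p.2 + dir (w₂ p.1 p.2))) := by
      funext p; simp [hFdef, Function.comp]
    rw [this]
    exact hmf.comp (h₁.prodMk (h₁.add ((continuous_dir.measurable).comp h₂)))
  -- the three kernels
  set K₁ : Plane × ℝ → ℝ := fun p => F p.1 p.2 with hK1def
  set K₂ : Plane × ℝ → ℝ := fun p => F p.1 (p.2 + π/3) with hK2def
  set K₃ : Plane × ℝ → ℝ := fun p => F (p.1 + dir p.2) (p.2 + 2*π/3) with hK3def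
  have hmK₁ : Measurable K₁ := by
    have := hmF (fun a _ => a) (fun _ θ => θ) measurable_fst measurable_snd
    simpa [hK1def] using this
  have hmK₂ : Measurable K₂ := by
    have := hmF (fun a _ => a) (fun _ θ => θ + π/3) measurable_fst
      (measurable_snd.add_const _)
    simpa [hK2def] using this
  have hmK₃ : Measurable K₃ := by
    have := hmF (fun a θ => a + dir θ) (fun _ θ => θ + 2*π/3)
      (measurable_fst.add (continuous_dir.measurable.comp measurable_snd))
      (measurable_snd.add_const _)
    simpa [hK3def] using this
  -- measures
  have h2pi : (0:ℝ) < 2 * π := by positivity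
  set T : Set ℝ := Set.Ioc (0:ℝ) (2*π) with hTdef
  set μ : Measure Plane := volume.restrict D with hμdef
  set ν : Measure ℝ := volume.restrict T with hνdef
  have hDmeas : MeasurableSet D := ZSpan.fundamentalDomain_measurableSet b
  have hDfin : volume D < ⊤ := (ZSpan.fundamentalDomain_isBounded b).measure_lt_top
  have hDpos : volume D ≠ 0 := ZSpan.measure_fundamentalDomain_ne_zero b
  haveI : IsFiniteMeasure μ := by
    constructor; rw [hμdef, Measure.restrict_apply_univ]; exact hDfin
  haveI : IsFiniteMeasure ν := by
    constructor; rw [hνdef, Measure.restrict_apply_univ]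
    simp [hTdef]
    exact ENNReal.mul_lt_top (by simp) ENNReal.ofReal_lt_top
  have hνuniv : (ν Set.univ).toReal = 2 * π := by
    rw [hνdef, Measure.restrict_apply_univ, hTdef, Real.volume_Ioc]
    rw [show (2*π - 0 : ℝ) = 2*π by ring, ENNReal.toReal_ofReal h2pi.le]
  -- integrability of the kernels on the product
  have hint : ∀ K : Plane × ℝ → ℝ, Measurable K → (∀ p, 0 ≤ K p) → (∀ p, K p ≤ 1) →
      Integrable K (μ.prod ν) := by
    intro K hm h0 h1
    refine (integrable_const (1:ℝ)).mono' hm.aestronglyMeasurable ?_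
    filter_upwards with p
    rw [Real.norm_eq_abs, abs_of_nonneg (h0 p)]
    exact h1 p
  have hintK₁ : Integrable K₁ (μ.prod ν) :=
    hint K₁ hmK₁ (fun p => hFnonneg _ _) (fun p => hFle _ _)
  have hintK₂ : Integrable K₂ (μ.prod ν) :=
    hint K₂ hmK₂ (fun p => hFnonneg _ _) (fun p => hFle _ _)
  have hintK₃ : Integrable K₃ (μ.prod ν) :=
    hint K₃ hmK₃ (fun p => hFnonneg _ _) (fun p => hFle _ _)
  -- integrability in θ for each fixed a, of arbitrary sections
  have hsec : ∀ g : ℝ → ℝ, Measurable g → (∀ x, 0 ≤ g x) → (∀ x, g x ≤ 1) →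
      Integrable g ν := by
    intro g hm h0 h1
    refine (integrable_const (1:ℝ)).mono' hm.aestronglyMeasurable ?_
    filter_upwards with x
    rw [Real.norm_eq_abs, abs_of_nonneg (h0 x)]
    exact h1 x
  have hsecK : ∀ (a : Plane) (K : Plane × ℝ → ℝ), Measurable K → (∀ p, 0 ≤ K p) →
      (∀ p, K p ≤ 1) → Integrable (fun θ => K (a, θ)) ν := by
    intro a K hm h0 h1
    refine (integrable_const (1:ℝ)).mono'
      ((hm.comp (measurable_const.prodMk measurable_id)).aestronglyMeasurable) ?_
    filter_upwards with θ
    rw [Real.norm_eq_abs, abs_of_nonneg (h0 _)]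
    exact h1 _
  have hsecK₁ : ∀ a, Integrable (fun θ => K₁ (a, θ)) ν :=
    fun a => hsecK a K₁ hmK₁ (fun p => hFnonneg _ _) (fun p => hFle _ _)
  have hsecK₂ : ∀ a, Integrable (fun θ => K₂ (a, θ)) ν :=
    fun a => hsecK a K₂ hmK₂ (fun p => hFnonneg _ _) (fun p => hFle _ _)
  have hsecK₃ : ∀ a, Integrable (fun θ => K₃ (a, θ)) ν :=
    fun a => hsecK a K₃ hmK₃ (fun p => hFnonneg _ _) (fun p => hFle _ _)
  -- the three averaged functions
  set H₁ : Plane → ℝ := fun a => ∫ θ, K₁ (a, θ) ∂ν with hH1def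
  set H₂ : Plane → ℝ := fun a => ∫ θ, K₂ (a, θ) ∂ν with hH2def
  set H₃ : Plane → ℝ := fun a => ∫ θ, K₃ (a, θ) ∂ν with hH3def
  have hintH₁ : Integrable H₁ μ := hintK₁.integral_prod_left
  have hintH₂ : Integrable H₂ μ := hintK₂.integral_prod_left
  have hintH₃ : Integrable H₃ μ := hintK₃.integral_prod_left
  -- pointwise pigeonhole bound
  have hpt : ∀ (a : Plane) (θ : ℝ), 1 ≤ K₁ (a, θ) + K₂ (a, θ) + K₃ (a, θ) := by
    intro a θ
    have htri : a + dir θ + dir (θ + 2*π/3) = a + dir (θ + π/3) := by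
      rw [dir_triangle θ]; abel
    have hph : ∀ x y z : Fin 2, x = y ∨ x = z ∨ y = z := by decide
    have h0₁ := hFnonneg a θ
    have h0₂ := hFnonneg a (θ + π/3)
    have h0₃ := hFnonneg (a + dir θ) (θ + 2*π/3)
    rcases hph (c a) (c (a + dir θ)) (c (a + dir (θ + π/3))) with h | h | h
    · have : K₁ (a, θ) = 1 := by simp [hK1def, hFdef, h]
      simp only [hK2def, hK3def] at *
      linarith
    · have : K₂ (a, θ) = 1 := by simp [hK2def, hFdef, h]
      simp only [hK1def, hK3def] at *
      linarith
    · have : K₃ (a, θ) = 1 := by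
        simp only [hK3def, hFdef, htri]
        rw [if_pos h]
      simp only [hK1def, hK2def] at *
      linarith
  -- integrate the pigeonhole bound in θ
  have hHsum : ∀ a : Plane, 2 * π ≤ H₁ a + H₂ a + H₃ a := by
    intro a
    have hadd : H₁ a + H₂ a + H₃ a
        = ∫ θ, (K₁ (a, θ) + K₂ (a, θ) + K₃ (a, θ)) ∂ν := by
      have i12 : Integrable (fun θ => K₁ (a, θ) + K₂ (a, θ)) ν := (hsecK₁ a).add (hsecK₂ a)
      rw [integral_add i12 (hsecK₃ a), integral_add (hsecK₁ a) (hsecK₂ a)]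
    have hone : ∫ (_ : ℝ), (1:ℝ) ∂ν = 2 * π := by
      rw [integral_const, smul_eq_mul, mul_one, measureReal_def, hνuniv]
    rw [hadd, ← hone]
    exact integral_mono (integrable_const 1)
      (((hsecK₁ a).add (hsecK₂ a)).add (hsecK₃ a)) (fun θ => hpt a θ)
  -- the outer integral of the bound
  set volR : ℝ := (volume D).toReal with hvolRdef
  have hvolRpos : 0 < volR := by
    rw [hvolRdef]
    exact ENNReal.toReal_pos hDpos hDfin.ne
  have hμuniv : (μ Set.univ).toReal = volR := by
    rw [hμdef, Measure.restrict_apply_univ, hvolRdef]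
  have houter : 2 * π * volR ≤ (∫ a, H₁ a ∂μ) + (∫ a, H₂ a ∂μ) + (∫ a, H₃ a ∂μ) := by
    have h1 : ∫ (_ : Plane), (2 * π : ℝ) ∂μ = 2 * π * volR := by
      rw [integral_const, smul_eq_mul, measureReal_def, hμuniv]; ring
    have h2 : ∫ a, (H₁ a + H₂ a + H₃ a) ∂μ
        = (∫ a, H₁ a ∂μ) + (∫ a, H₂ a ∂μ) + (∫ a, H₃ a ∂μ) := by
      have i12 : Integrable (fun a => H₁ a + H₂ a) μ := hintH₁.add hintH₂
      rw [integral_add i12 hintH₃, integral_add hintH₁ hintH₂]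
    rw [← h1, ← h2]
    exact integral_mono (integrable_const _) ((hintH₁.add hintH₂).add hintH₃) hHsum
  -- shifting θ by a constant does not change the ν-integral of a 2π-periodic function
  have hshift : ∀ (g : ℝ → ℝ), Function.Periodic g (2*π) → (s : ℝ) →
      ∫ θ, g (θ + s) ∂ν = ∫ θ, g θ ∂ν := by
    intro g hg s
    have e1 : ∫ θ, g (θ + s) ∂ν = ∫ θ in (0:ℝ)..(2*π), g (θ + s) := by
      rw [intervalIntegral.integral_of_le h2pi.le, hνdef, hTdef]
    have e2 : ∫ θ, g θ ∂ν = ∫ θ in (0:ℝ)..(2*π), g θ := by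
      rw [intervalIntegral.integral_of_le h2pi.le, hνdef, hTdef]
    rw [e1, e2, intervalIntegral.integral_comp_add_right g s]
    have := hg.intervalIntegral_add_eq s 0
    rw [zero_add] at this
    rw [show (0:ℝ) + s = s by ring, show 2*π + s = s + 2*π by ring, this]
  -- H₂ is pointwise equal to H₁
  have hH21 : ∀ a, H₂ a = H₁ a := fun a => hshift (F a) (hFper a) (π/3)
  -- the H₃ integral equals the H₁ integral
  have hH31 : ∫ a, H₃ a ∂μ = ∫ a, H₁ a ∂μ := by
    have hswap₃ : ∫ a, H₃ a ∂μ = ∫ θ, (∫ a, K₃ (a, θ) ∂μ) ∂ν :=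
      integral_integral_swap (by exact hintK₃)
    have hswap₁ : ∫ a, H₁ a ∂μ = ∫ θ, (∫ a, K₁ (a, θ) ∂μ) ∂ν :=
      integral_integral_swap (by exact hintK₁)
    rw [hswap₃, hswap₁]
    -- for fixed θ, translate `a` by `dir θ`
    have htrans : ∀ θ : ℝ, ∫ a, K₃ (a, θ) ∂μ = ∫ a, F a (θ + 2*π/3) ∂μ := by
      intro θ
      have hgper : ∀ l ∈ span ℤ (Set.range ⇑b), ∀ x : Plane,
          F (x + l) (θ + 2*π/3) = F x (θ + 2*π/3) := by
        intro l hl x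
        simp only [hFdef]
        have h1 : c (x + l) = c x := hlat l hl x
        have h2 : c (x + l + dir (θ + 2*π/3)) = c (x + dir (θ + 2*π/3)) := by
          have : x + l + dir (θ + 2*π/3) = (x + dir (θ + 2*π/3)) + l := by abel
          rw [this, hlat l hl]
        rw [h1, h2]
      have := setIntegral_fundamentalDomain_add b (fun x => F x (θ + 2*π/3)) hgper (dir θ)
      simpa [hK3def, hμdef, hDdef] using this
    have hcong : ∫ θ, (∫ a, K₃ (a, θ) ∂μ) ∂ν
        = ∫ θ, (fun ψ => ∫ a, F a ψ ∂μ) (θ + 2*π/3) ∂ν := by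
      exact integral_congr_ae (Filter.Eventually.of_forall fun θ => htrans θ)
    rw [hcong]
    have hGper : Function.Periodic (fun ψ => ∫ a, F a ψ ∂μ) (2*π) := by
      intro ψ
      simp only [hFper]
      congr 1
      funext a
      exact hFper a ψ
    rw [hshift _ hGper (2*π/3)]
  -- put everything together
  have hkey : 2 * π * volR ≤ 3 * ∫ a, H₁ a ∂μ := by
    have h2 : ∫ a, H₂ a ∂μ = ∫ a, H₁ a ∂μ :=
      integral_congr_ae (Filter.Eventually.of_forall fun a => hH21 a)
    rw [h2, hH31] at houter
    linarith
  -- identify `pper` with the normalized integral of `H₁`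
  have hpper : pper c u v = (1 / (2 * π * volR)) * ∫ a, H₁ a ∂μ := by
    unfold pper
    rw [hpara]
    congr 1
    refine integral_congr_ae (Filter.Eventually.of_forall fun a => ?_)
    show (∫ θ in (0:ℝ)..(2*π), if c a = c (a + dir θ) then (1:ℝ) else 0) = H₁ a
    rw [intervalIntegral.integral_of_le h2pi.le]
  rw [hpper]
  have hpos : 0 < 2 * π * volR := by positivity
  have hne : 2 * π * volR ≠ 0 := ne_of_gt hpos
  have h1 : (1:ℝ)/3 = (1/(2*π*volR)) * (2*π*volR/3) := by
    field_simp
  rw [h1]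
  exact mul_le_mul_of_nonneg_left (by linarith) (by positivity)

end
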